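/- (Moment approximation error, eq. 11) Let σ > 0, let p be an even positive integer, let ε > 0, let k be an even nonnegative integer, and let N be a nonnegative integer. Let C(ε) = (∫_ℝ p_G(x) exp(−ε x^p) dx)^{−1} and let μ_k = C(ε) ∫_ℝ p_G(x) x^k exp(−ε x^p) dx be the k-th raw moment of the perturbed density. Then |μ_k − C(ε) Σ_{n=0}^{N} ((−ε)^n / n!) (np+k−1)!! σ^{np+k}| ≤ C(ε) · (ε^{N+1}/(N+1)!) · ((N+1)p + k − 1)!! · σ^{(N+1)p+k}. -/

import Mathlib

open MeasureTheory Real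

/-- The centered Gaussian density with standard deviation `σ`. -/
noncomputable def pG (σ x : ℝ) : ℝ :=
  (1 / (Real.sqrt (2 * Real.pi) * σ)) * Real.exp (-x ^ 2 / (2 * σ ^ 2))

open Filter

lemma myPowLeExp (m : ℕ) {y : ℝ} (hy : 0 ≤ y) : y ^ m ≤ (m.factorial : ℝ) * Real.exp y := by
  have h1 : y ^ m / (m.factorial : ℝ) ≤ ∑ i ∈ Finset.range (m + 1), y ^ i / (i.factorial : ℝ) := by
    refine Finset.single_le_sum (f := fun i => y ^ i / (i.factorial : ℝ)) ?_ ?_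
    · intro i _; positivity
    · simp
  have h2 := Real.sum_le_exp_of_nonneg hy (m + 1)
  have h3 : y ^ m / (m.factorial : ℝ) ≤ Real.exp y := h1.trans h2
  have hm : (0:ℝ) < (m.factorial : ℝ) := by positivity
  calc y ^ m = y ^ m / (m.factorial : ℝ) * (m.factorial : ℝ) := by field_simp
    _ ≤ Real.exp y * (m.factorial : ℝ) := by gcongr
    _ = (m.factorial : ℝ) * Real.exp y := by ring

lemma myIntegrablePow {b : ℝ} (hb : 0 < b) (n : ℕ) :
    Integrable fun x : ℝ => x ^ n * Real.exp (-b * x ^ 2) := by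
  have hb2 : 0 < b / 2 := by linarith
  refine Integrable.mono'
    ((integrable_exp_neg_mul_sq hb).add
      (((integrable_exp_neg_mul_sq hb2).const_mul ((2 / b) ^ n * (n.factorial : ℝ)))))
    ?_ ?_
  · exact ((continuous_pow n).mul
      (Real.continuous_exp.comp (continuous_const.mul (continuous_pow 2)))).aestronglyMeasurable
  · filter_upwards with x
    have hexp : (0:ℝ) < Real.exp (-b * x ^ 2) := Real.exp_pos _
    rw [Real.norm_eq_abs, abs_mul, abs_of_pos hexp, abs_pow]
    have key : |x| ^ n ≤ 1 + (2 / b) ^ n * (n.factorial : ℝ) * Real.exp (b / 2 * x ^ 2) := by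
      rcases le_total (|x|) 1 with h | h
      · have : |x| ^ n ≤ 1 := pow_le_one₀ (abs_nonneg x) h
        have : (0:ℝ) ≤ (2 / b) ^ n * (n.factorial : ℝ) * Real.exp (b / 2 * x ^ 2) := by positivity
        linarith
      · have h1 : |x| ^ n ≤ (x ^ 2) ^ n := by
          calc |x| ^ n ≤ (|x| ^ 2) ^ n := by
                refine pow_le_pow_left₀ (abs_nonneg x) ?_ n
                nlinarith [abs_nonneg x]
            _ = (x ^ 2) ^ n := by rw [sq_abs]
        have h2 : (x ^ 2) ^ n ≤ (2 / b) ^ n * (n.factorial : ℝ) * Real.exp (b / 2 * x ^ 2) := by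
          have := myPowLeExp n (y := b / 2 * x ^ 2) (by positivity)
          calc (x ^ 2) ^ n = (2 / b) ^ n * (b / 2 * x ^ 2) ^ n := by
                rw [← mul_pow]; congr 1; field_simp; all_goals ring
            _ ≤ (2 / b) ^ n * ((n.factorial : ℝ) * Real.exp (b / 2 * x ^ 2)) := by
                gcongr
            _ = (2 / b) ^ n * (n.factorial : ℝ) * Real.exp (b / 2 * x ^ 2) := by ring
        have : (0:ℝ) < 1 := one_pos
        linarith
    calc |x| ^ n * Real.exp (-b * x ^ 2)
        ≤ (1 + (2 / b) ^ n * (n.factorial : ℝ) * Real.exp (b / 2 * x ^ 2)) *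
            Real.exp (-b * x ^ 2) := by gcongr
      _ = Real.exp (-b * x ^ 2) +
          (2 / b) ^ n * (n.factorial : ℝ) * Real.exp (-(b / 2) * x ^ 2) := by
          rw [add_mul, one_mul, mul_assoc, ← Real.exp_add]; ring_nf

lemma myTendstoPowExp {b : ℝ} (hb : 0 < b) (n : ℕ) :
    Tendsto (fun x : ℝ => x ^ n * Real.exp (-b * x ^ 2)) atTop (nhds 0) := by
  have h := rpow_mul_exp_neg_mul_sq_isLittleO_exp_neg hb (n : ℝ)
  have h2 : (fun x : ℝ => x ^ n * Real.exp (-b * x ^ 2)) =o[atTop]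
      fun x : ℝ => Real.exp (-(1/2) * x) := by
    refine h.congr' ?_ (by rfl)
    filter_upwards with x
    rw [Real.rpow_natCast]
  refine h2.isBigO.trans_tendsto ?_
  have hlin : Tendsto (fun x : ℝ => -(1/2 : ℝ) * x) atTop atBot :=
    tendsto_id.const_mul_atTop_of_neg (by norm_num)
  exact Real.tendsto_exp_atBot.comp hlin

lemma myGaussRec {b : ℝ} (hb : 0 < b) (m : ℕ) :
    (2 * b) * ∫ x : ℝ, x ^ (m + 2) * Real.exp (-b * x ^ 2) =
      (m + 1 : ℝ) * ∫ x : ℝ, x ^ m * Real.exp (-b * x ^ 2) := by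
  set f : ℝ → ℝ := fun x => x ^ (m + 1) * Real.exp (-b * x ^ 2) with hf
  set g : ℝ → ℝ := fun x =>
    (m + 1 : ℝ) * (x ^ m * Real.exp (-b * x ^ 2)) -
      (2 * b) * (x ^ (m + 2) * Real.exp (-b * x ^ 2)) with hg
  have hderiv : ∀ x : ℝ, HasDerivAt f (g x) x := by
    intro x
    have h1 : HasDerivAt (fun x : ℝ => x ^ (m + 1)) ((m + 1 : ℝ) * x ^ m) x := by
      simpa using hasDerivAt_pow (m + 1) x
    have h2 : HasDerivAt (fun x : ℝ => Real.exp (-b * x ^ 2))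
        (Real.exp (-b * x ^ 2) * (-b * (2 * x))) x := by
      have : HasDerivAt (fun x : ℝ => -b * x ^ 2) (-b * (2 * x)) x := by
        simpa using (hasDerivAt_pow 2 x).const_mul (-b)
      exact (Real.hasDerivAt_exp _).comp x this
    have := h1.mul h2
    refine this.congr_deriv ?_
    symm
    simp only [hg]
    ring
  have hgint : Integrable g := by
    exact (((myIntegrablePow hb m).const_mul _).sub ((myIntegrablePow hb (m + 2)).const_mul _))
  have htop : Tendsto f atTop (nhds 0) := myTendstoPowExp hb (m + 1)
  have hbot : Tendsto f atBot (nhds 0) := by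
    have h1 : Tendsto (fun x : ℝ => f (-x)) atTop (nhds 0) := by
      have : (fun x : ℝ => f (-x)) =
          fun x : ℝ => (-1 : ℝ) ^ (m + 1) * (x ^ (m + 1) * Real.exp (-b * x ^ 2)) := by
        funext x; simp only [hf]; rw [neg_pow]; ring_nf
      rw [this]
      simpa using (myTendstoPowExp hb (m + 1)).const_mul ((-1 : ℝ) ^ (m + 1))
    have h2 := h1.comp tendsto_neg_atBot_atTop
    exact h2.congr (fun x => by simp [Function.comp])
  have hf0 : f 0 = 0 := by simp [hf]
  have hIoi : ∫ x in Set.Ioi (0:ℝ), g x = 0 := by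
    rw [integral_Ioi_of_hasDerivAt_of_tendsto' (fun x _ => hderiv x) hgint.integrableOn htop]
    rw [hf0, sub_zero]
  have hIic : ∫ x in Set.Iic (0:ℝ), g x = 0 := by
    rw [integral_Iic_of_hasDerivAt_of_tendsto' (fun x _ => hderiv x) hgint.integrableOn hbot]
    rw [hf0, sub_zero]
  have htot : ∫ x : ℝ, g x = 0 := by
    rw [← intervalIntegral.integral_Iic_add_Ioi hgint.integrableOn hgint.integrableOn, hIoi, hIic, add_zero]
  have := htot
  rw [hg] at this
  rw [integral_sub ((myIntegrablePow hb m).const_mul _) ((myIntegrablePow hb (m + 2)).const_mul _),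
    integral_const_mul, integral_const_mul, sub_eq_zero] at this
  linarith [this]

lemma myGaussMoment {b : ℝ} (hb : 0 < b) (j : ℕ) :
    ∫ x : ℝ, x ^ (2 * j) * Real.exp (-b * x ^ 2) =
      (Nat.doubleFactorial (2 * j - 1) : ℝ) * Real.sqrt (π / b) / (2 * b) ^ j := by
  induction j with
  | zero => simpa using integral_gaussian b
  | succ j ih =>
    have h2 : 2 * (j + 1) = 2 * j + 2 := by ring
    have hrec := myGaussRec hb (2 * j)
    rw [← h2] at hrec
    have hb2 : (2 * b) ≠ 0 := by positivity
    have : ∫ x : ℝ, x ^ (2 * (j + 1)) * Real.exp (-b * x ^ 2) =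
        ((2 * j + 1 : ℝ)) * (∫ x : ℝ, x ^ (2 * j) * Real.exp (-b * x ^ 2)) / (2 * b) := by
      field_simp at hrec ⊢
      push_cast at hrec ⊢
      linarith [hrec]
    rw [this, ih]
    have hdf : (Nat.doubleFactorial (2 * (j + 1) - 1) : ℝ) =
        (2 * j + 1 : ℝ) * (Nat.doubleFactorial (2 * j - 1) : ℝ) := by
      have h3 : 2 * (j + 1) - 1 = (2 * j) + 1 := by omega
      rw [h3, Nat.doubleFactorial_add_one]
      push_cast
      ring
    rw [hdf, pow_succ]
    field_simp

lemma myB_pos {σ : ℝ} (hσ : 0 < σ) : 0 < 1 / (2 * σ ^ 2) := by positivity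

lemma myPG_eq {σ : ℝ} (hσ : 0 < σ) (x : ℝ) :
    pG σ x = (1 / (Real.sqrt (2 * π) * σ)) * Real.exp (-(1 / (2 * σ ^ 2)) * x ^ 2) := by
  unfold pG
  congr 2
  field_simp

lemma myIntegrablePGPow {σ : ℝ} (hσ : 0 < σ) (m : ℕ) :
    Integrable fun x : ℝ => pG σ x * x ^ m := by
  have : (fun x : ℝ => pG σ x * x ^ m) = fun x : ℝ =>
      (1 / (Real.sqrt (2 * π) * σ)) * (x ^ m * Real.exp (-(1 / (2 * σ ^ 2)) * x ^ 2)) := by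
    funext x; rw [myPG_eq hσ]; ring
  rw [this]
  exact (myIntegrablePow (myB_pos hσ) m).const_mul _

lemma myPGMoment {σ : ℝ} (hσ : 0 < σ) (j : ℕ) :
    ∫ x : ℝ, pG σ x * x ^ (2 * j) =
      (Nat.doubleFactorial (2 * j - 1) : ℝ) * σ ^ (2 * j) := by
  have h : (fun x : ℝ => pG σ x * x ^ (2 * j)) = fun x : ℝ =>
      (1 / (Real.sqrt (2 * π) * σ)) *
        (x ^ (2 * j) * Real.exp (-(1 / (2 * σ ^ 2)) * x ^ 2)) := by
    funext x; rw [myPG_eq hσ]; ring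
  rw [h, integral_const_mul, myGaussMoment (myB_pos hσ)]
  have hsq : Real.sqrt (π / (1 / (2 * σ ^ 2))) = Real.sqrt (2 * π) * σ := by
    have h1 : π / (1 / (2 * σ ^ 2)) = (2 * π) * σ ^ 2 := by field_simp
    rw [h1, Real.sqrt_mul (by positivity), Real.sqrt_sq hσ.le]
  rw [hsq]
  have h2 : (2 * (1 / (2 * σ ^ 2))) ^ j = (σ ^ 2)⁻¹ ^ j := by
    congr 1
    field_simp
  rw [h2]
  have hs : Real.sqrt (2 * π) > 0 := Real.sqrt_pos.mpr (by positivity)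
  field_simp
  rw [pow_mul, ← mul_pow, one_div, inv_mul_cancel₀ (by positivity), one_pow]

lemma myPGMomentEven {σ : ℝ} (hσ : 0 < σ) {m : ℕ} (hm : Even m) :
    ∫ x : ℝ, pG σ x * x ^ m =
      (Nat.doubleFactorial (m - 1) : ℝ) * σ ^ m := by
  obtain ⟨j, hj⟩ := hm
  have : m = 2 * j := by omega
  subst this
  exact myPGMoment hσ j

lemma myExpTaylorBound : ∀ (N : ℕ) {t : ℝ}, 0 ≤ t →
    |Real.exp (-t) - ∑ n ∈ Finset.range (N + 1), (-t) ^ n / (n.factorial : ℝ)| ≤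
      t ^ (N + 1) / ((N + 1).factorial : ℝ) := by
  intro N
  induction N with
  | zero =>
    intro t ht
    have hs : ∑ n ∈ Finset.range (0 + 1), (-t) ^ n / (n.factorial : ℝ) = 1 := by simp
    have hp : t ^ (0 + 1) / ((0 + 1).factorial : ℝ) = t := by norm_num
    rw [hs, hp]
    rw [abs_sub_comm, abs_of_nonneg (by linarith [Real.exp_le_one_iff.mpr (by linarith : -t ≤ 0)])]
    have := Real.add_one_le_exp (-t)
    linarith
  | succ N ih =>
    intro t ht
    set F : ℝ → ℝ := fun s =>
      Real.exp (-s) - ∑ n ∈ Finset.range (N + 2), (-s) ^ n / (n.factorial : ℝ) with hF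
    have hF0 : F 0 = 0 := by
      simp only [hF, neg_zero]
      rw [Finset.sum_eq_single 0]
      · simp
      · intro n _ hn
        rw [zero_pow hn]; simp
      · simp
    have hderiv : ∀ s : ℝ, HasDerivAt F
        (-(Real.exp (-s) - ∑ n ∈ Finset.range (N + 1), (-s) ^ n / (n.factorial : ℝ))) s := by
      intro s
      have h1 : HasDerivAt (fun s : ℝ => Real.exp (-s)) (-Real.exp (-s)) s := by
        simpa [Function.comp_def] using (Real.hasDerivAt_exp (-s)).comp s (hasDerivAt_neg s)
      have h2 : HasDerivAt
          (fun s : ℝ => ∑ n ∈ Finset.range (N + 2), (-s) ^ n / (n.factorial : ℝ))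
          (∑ n ∈ Finset.range (N + 1), (-s) ^ n / (n.factorial : ℝ) * (-1)) s := by
        have hterm : ∀ n ∈ Finset.range (N + 2), HasDerivAt
            (fun s : ℝ => (-s) ^ n / (n.factorial : ℝ))
            ((n : ℝ) * (-s) ^ (n - 1) * (-1) / (n.factorial : ℝ)) s := by
          intro n _
          have := ((hasDerivAt_pow n (-s)).comp s (hasDerivAt_neg s)).div_const
            ((n.factorial : ℝ))
          simpa using this
        have hsum := HasDerivAt.fun_sum hterm
        refine hsum.congr_deriv ?_
        symm
        rw [Finset.sum_range_succ' (fun n => (n : ℝ) * (-s) ^ (n - 1) * (-1) / (n.factorial : ℝ))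
          (N + 1)]
        simp only [Nat.cast_zero, zero_mul, Nat.factorial_zero, Nat.cast_one,
          zero_div, add_zero, zero_mul, mul_zero]
        apply Finset.sum_congr rfl
        intro i _
        have hfac : ((i + 1).factorial : ℝ) = (i + 1 : ℝ) * (i.factorial : ℝ) := by
          rw [Nat.factorial_succ]; push_cast; ring
        rw [Nat.add_sub_cancel, hfac]
        push_cast
        field_simp [hfac]
      have := h1.fun_sub h2
      refine this.congr_deriv ?_
      symm
      have : ∑ n ∈ Finset.range (N + 1), (-s) ^ n / (n.factorial : ℝ) * (-1) =
          -∑ n ∈ Finset.range (N + 1), (-s) ^ n / (n.factorial : ℝ) := by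
        rw [← Finset.sum_neg_distrib]
        apply Finset.sum_congr rfl
        intro i _; ring
      rw [this]
      ring
    have hFt : F t = ∫ s in (0:ℝ)..t,
        -(Real.exp (-s) - ∑ n ∈ Finset.range (N + 1), (-s) ^ n / (n.factorial : ℝ)) := by
      rw [intervalIntegral.integral_eq_sub_of_hasDerivAt (fun s _ => hderiv s) ?_, hF0, sub_zero]
      apply Continuous.intervalIntegrable
      continuity
    have hbound : |F t| ≤ t ^ (N + 2) / ((N + 2).factorial : ℝ) := by
      rw [hFt]
      have h4 : ∫ s in (0:ℝ)..t, s ^ (N + 1) / ((N + 1).factorial : ℝ) =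
          t ^ (N + 2) / ((N + 2).factorial : ℝ) := by
        rw [intervalIntegral.integral_div, integral_pow]
        have hfac2 : ((N + 2).factorial : ℝ) = (N + 2 : ℝ) * ((N + 1).factorial : ℝ) := by
          rw [show N + 2 = (N + 1) + 1 by ring, Nat.factorial_succ]; push_cast; ring
        rw [hfac2, zero_pow (by omega : N + 1 + 1 ≠ 0), sub_zero, div_div]
        have he : N + 1 + 1 = N + 2 := by ring
        rw [he]
        congr 1
        push_cast
        ring
      have h3 : |∫ s in (0:ℝ)..t,
          -(Real.exp (-s) - ∑ n ∈ Finset.range (N + 1), (-s) ^ n / (n.factorial : ℝ))| ≤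
          |∫ s in (0:ℝ)..t, s ^ (N + 1) / ((N + 1).factorial : ℝ)| := by
        rw [← Real.norm_eq_abs]
        apply intervalIntegral.norm_integral_le_abs_of_norm_le ?_ ?_
        · filter_upwards [ae_restrict_mem measurableSet_uIoc] with s hs
          rw [Set.uIoc_of_le ht] at hs
          rw [Real.norm_eq_abs, abs_neg]
          exact ih hs.1.le
        · apply Continuous.intervalIntegrable
          continuity
      rw [h4] at h3
      rw [abs_of_nonneg (show (0:ℝ) ≤ t ^ (N + 2) / ((N + 2).factorial : ℝ) from
        div_nonneg (pow_nonneg ht _) (Nat.cast_nonneg _))] at h3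
      exact h3
    calc |Real.exp (-t) - ∑ n ∈ Finset.range (N + 1 + 1), (-t) ^ n / (n.factorial : ℝ)|
        = |F t| := by rw [hF]
      _ ≤ t ^ (N + 2) / ((N + 2).factorial : ℝ) := hbound
      _ = t ^ (N + 1 + 1) / ((N + 1 + 1).factorial : ℝ) := by norm_num

theorem stmt3 (σ : ℝ) (hσ : 0 < σ) (p : ℕ) (hp : 0 < p) (hpe : Even p)
    (ε : ℝ) (hε : 0 < ε) (k : ℕ) (hk : Even k) (N : ℕ)
    (C : ℝ) (hC : C = (∫ x : ℝ, pG σ x * Real.exp (-ε * x ^ p))⁻¹)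
    (μ : ℝ) (hμ : μ = C * ∫ x : ℝ, pG σ x * x ^ k * Real.exp (-ε * x ^ p)) :
    |μ - C * ∑ n ∈ Finset.range (N + 1),
        (-ε) ^ n / (n.factorial : ℝ) *
          (Nat.doubleFactorial (n * p + k - 1) : ℝ) * σ ^ (n * p + k)| ≤
      C * (ε ^ (N + 1) / ((N + 1).factorial : ℝ)) *
        (Nat.doubleFactorial ((N + 1) * p + k - 1) : ℝ) * σ ^ ((N + 1) * p + k) := by
  have hpGcont : Continuous (pG σ) := by
    unfold pG
    exact continuous_const.mul
      (Real.continuous_exp.comp ((continuous_pow 2).neg.div_const _))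
  have hpG_nonneg : ∀ x, 0 ≤ pG σ x := by
    intro x
    unfold pG
    positivity
  have hxp_nonneg : ∀ x : ℝ, (0:ℝ) ≤ x ^ p := fun x => hpe.pow_nonneg x
  have hexp_le_one : ∀ x : ℝ, Real.exp (-ε * x ^ p) ≤ 1 := by
    intro x
    apply Real.exp_le_one_iff.mpr
    nlinarith [hxp_nonneg x]
  -- C is nonnegative
  have hCnon : 0 ≤ C := by
    rw [hC]
    apply inv_nonneg.mpr
    exact integral_nonneg fun x => mul_nonneg (hpG_nonneg x) (Real.exp_pos _).le
  have heN : ∀ n : ℕ, Even (n * p + k) := fun n => (hpe.mul_left n).add hk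
  -- integrability of pG * x^m * exp(-ε x^p) for even m
  have hint : ∀ m : ℕ, Even m →
      Integrable (fun x : ℝ => pG σ x * x ^ m * Real.exp (-ε * x ^ p)) := by
    intro m hm
    refine Integrable.mono' (myIntegrablePGPow hσ m) ?_ ?_
    · exact ((hpGcont.mul (continuous_pow m)).mul
        (Real.continuous_exp.comp (continuous_const.mul (continuous_pow p)))).aestronglyMeasurable
    · filter_upwards with x
      rw [Real.norm_eq_abs, abs_mul, abs_mul, abs_of_nonneg (hpG_nonneg x),
        abs_of_nonneg (hm.pow_nonneg x), abs_of_pos (Real.exp_pos _)]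
      calc pG σ x * x ^ m * Real.exp (-ε * x ^ p)
          ≤ pG σ x * x ^ m * 1 :=
            mul_le_mul_of_nonneg_left (hexp_le_one x)
              (mul_nonneg (hpG_nonneg x) (hm.pow_nonneg x))
        _ = pG σ x * x ^ m := by ring
  set f : ℝ → ℝ := fun x => pG σ x * x ^ k * Real.exp (-ε * x ^ p) with hfdef
  set g : ℝ → ℝ := fun x => ∑ n ∈ Finset.range (N + 1),
    (-ε) ^ n / (n.factorial : ℝ) * (pG σ x * x ^ (n * p + k)) with hgdef
  have hfint : Integrable f := hint k hk
  have hgint : Integrable g :=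
    integrable_finset_sum _ (fun n _ => (myIntegrablePGPow hσ (n * p + k)).const_mul _)
  have hgval : ∫ x : ℝ, g x = ∑ n ∈ Finset.range (N + 1),
      (-ε) ^ n / (n.factorial : ℝ) *
        (Nat.doubleFactorial (n * p + k - 1) : ℝ) * σ ^ (n * p + k) := by
    rw [hgdef, integral_finset_sum _
      (fun n _ => (myIntegrablePGPow hσ (n * p + k)).const_mul _)]
    apply Finset.sum_congr rfl
    intro n _
    rw [integral_const_mul, myPGMomentEven hσ (heN n)]
    ring
  -- rewrite goal
  have hkey : μ - C * ∑ n ∈ Finset.range (N + 1),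
      (-ε) ^ n / (n.factorial : ℝ) *
        (Nat.doubleFactorial (n * p + k - 1) : ℝ) * σ ^ (n * p + k) =
      C * ∫ x : ℝ, (f x - g x) := by
    rw [hμ, ← hgval, integral_sub hfint hgint]
    ring
  set h : ℝ → ℝ := fun x => ε ^ (N + 1) / ((N + 1).factorial : ℝ) *
    (pG σ x * x ^ ((N + 1) * p + k)) with hhdef
  have hhint : Integrable h := (myIntegrablePGPow hσ _).const_mul _
  have hptwise : ∀ x : ℝ, ‖f x - g x‖ ≤ h x := by
    intro x
    have e1 : g x = pG σ x * x ^ k *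
        ∑ n ∈ Finset.range (N + 1), (-(ε * x ^ p)) ^ n / (n.factorial : ℝ) := by
      rw [hgdef, Finset.mul_sum]
      apply Finset.sum_congr rfl
      intro n _
      rw [show -(ε * x ^ p) = (-ε) * x ^ p by ring, mul_pow, ← pow_mul]
      rw [show n * p + k = p * n + k by ring, pow_add]
      ring
    have e2 : f x - g x = pG σ x * x ^ k *
        (Real.exp (-(ε * x ^ p)) -
          ∑ n ∈ Finset.range (N + 1), (-(ε * x ^ p)) ^ n / (n.factorial : ℝ)) := by
      rw [e1]
      simp only [hfdef, neg_mul]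
      ring
    have ht : (0:ℝ) ≤ ε * x ^ p := mul_nonneg hε.le (hxp_nonneg x)
    have htb := myExpTaylorBound N ht
    rw [e2, Real.norm_eq_abs, abs_mul, abs_mul, abs_of_nonneg (hpG_nonneg x),
      abs_of_nonneg (hk.pow_nonneg x)]
    calc pG σ x * x ^ k * |Real.exp (-(ε * x ^ p)) -
          ∑ n ∈ Finset.range (N + 1), (-(ε * x ^ p)) ^ n / (n.factorial : ℝ)|
        ≤ pG σ x * x ^ k * ((ε * x ^ p) ^ (N + 1) / ((N + 1).factorial : ℝ)) :=
          mul_le_mul_of_nonneg_left htb (mul_nonneg (hpG_nonneg x) (hk.pow_nonneg x))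
      _ = h x := by
          rw [hhdef]
          simp only []
          rw [mul_pow, ← pow_mul]
          rw [show (N + 1) * p + k = p * (N + 1) + k by ring, pow_add]
          ring
  have hbound : |∫ x : ℝ, (f x - g x)| ≤ ∫ x : ℝ, h x := by
    rw [← Real.norm_eq_abs]
    exact norm_integral_le_of_norm_le hhint (Eventually.of_forall hptwise)
  have hhval : ∫ x : ℝ, h x = ε ^ (N + 1) / ((N + 1).factorial : ℝ) *
      (Nat.doubleFactorial ((N + 1) * p + k - 1) : ℝ) * σ ^ ((N + 1) * p + k) := by
    rw [hhdef, integral_const_mul, myPGMomentEven hσ (heN (N + 1))]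
    ring
  rw [hkey, abs_mul, abs_of_nonneg hCnon]
  calc C * |∫ x : ℝ, (f x - g x)| ≤ C * ∫ x : ℝ, h x :=
      mul_le_mul_of_nonneg_left hbound hCnon
    _ = C * (ε ^ (N + 1) / ((N + 1).factorial : ℝ)) *
        (Nat.doubleFactorial ((N + 1) * p + k - 1) : ℝ) * σ ^ ((N + 1) * p + k) := by
      rw [hhval]; ring
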